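/- If G is a compact Lie group acting on a stratified space X by a stratified action, then the orbit space B = X/G with the partition {π(S) : S a stratum of X} is a stratified space, and the orbit map π : X → B is a morphism of stratified spaces. -/

import Mathlib

/-- A stratified space: a locally finite partition into connected strata
satisfying the frontier condition. -/
structure StratifiedSpace (X : Type*) [TopologicalSpace X] where
  strata : Set (Set X)
  nonempty_strata : ∀ S ∈ strata, S.Nonempty
  covers : ∀ x : X, ∃ S ∈ strata, x ∈ S
  disj : ∀ S ∈ strata, ∀ T ∈ strata, (S ∩ T).Nonempty → S = T
  connected : ∀ S ∈ strata, IsConnected S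
  locallyFinite : ∀ x : X, ∃ U ∈ nhds x, {S ∈ strata | (S ∩ U).Nonempty}.Finite
  frontier_cond : ∀ S ∈ strata, ∀ T ∈ strata, (S ∩ closure T).Nonempty → S ⊆ closure T

/-- The regular part: the union of the open strata. -/
def regularPart {X : Type*} [TopologicalSpace X] (𝒳 : StratifiedSpace X) : Set X :=
  ⋃₀ {S | S ∈ 𝒳.strata ∧ IsOpen S}

/-- for a stratified action of a compact (abelian) group `G` on a
stratified space `X` — a continuous effective action which is a morphism of
stratified spaces (each transformation maps strata onto strata), is free on the
regular part, and for which the isotropy is constant along each stratum — the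
orbit space `B = X/G` with the partition `{π(S)}` is a stratified space, and
the orbit map `π : X → B` is continuous and sends strata into strata (a
morphism of stratified spaces). -/
theorem orbit_space_stratified (G : Type*) (X : Type*)
    [CommGroup G] [TopologicalSpace G] [IsTopologicalGroup G]
    [CompactSpace G] [TopologicalSpace X]
    [T2Space X] [ParacompactSpace X] [SecondCountableTopology X]
    [MulAction G X] [ContinuousSMul G X]
    (𝒳 : StratifiedSpace X)
    -- the action is effective
    (heff : ∀ g : G, (∀ x : X, g • x = x) → g = 1)
    -- each transformation Φ_g is an isomorphism of stratified spaces
    (hmor : ∀ g : G, ∀ S ∈ 𝒳.strata, (fun x => g • x) '' S ∈ 𝒳.strata)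
    -- the action is free on the regular part
    (hfree : ∀ x ∈ regularPart 𝒳, ∀ g : G, g • x = x → g = 1)
    -- points of one stratum have the same isotropy
    (hiso : ∀ S ∈ 𝒳.strata, ∀ x ∈ S, ∀ y ∈ S,
      MulAction.stabilizer G x = MulAction.stabilizer G y) :
    ∃ SB : StratifiedSpace (Quotient (MulAction.orbitRel G X)),
      SB.strata = (fun S => (Quotient.mk (MulAction.orbitRel G X)) '' S) '' 𝒳.strata ∧
      Continuous (Quotient.mk (MulAction.orbitRel G X)) ∧
      ∀ S ∈ 𝒳.strata, (Quotient.mk (MulAction.orbitRel G X)) '' S ∈ SB.strata := by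
  classical
  set π := Quotient.mk (MulAction.orbitRel G X) with hπ
  have hoq : IsOpenQuotientMap π := MulAction.isOpenQuotientMap_quotientMk
  have hcont : Continuous π := hoq.continuous
  have hπs : ∀ (g : G) (x : X), π (g • x) = π x := fun g x =>
    Quotient.sound (MulAction.mem_orbit x g)
  have himg : ∀ (g : G) (T : Set X), π '' ((fun x => g • x) '' T) = π '' T := by
    intro g T
    rw [Set.image_image]
    exact Set.image_congr fun y _ => hπs g y
  -- saturation
  have hsat : ∀ T : Set X, π ⁻¹' (π '' T) = ⋃ g : G, (fun x => g • x) '' T := by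
    intro T
    ext x
    constructor
    · rintro ⟨y, hy, hyx⟩
      obtain ⟨g, hg⟩ : y ∈ MulAction.orbit G x := Quotient.exact hyx
      exact Set.mem_iUnion.2 ⟨g⁻¹, y, hy, by dsimp only at hg ⊢; rw [← hg, inv_smul_smul]⟩
    · rintro h
      obtain ⟨g, y, hy, rfl⟩ := Set.mem_iUnion.1 h
      exact ⟨y, hy, (hπs g y).symm⟩
  refine ⟨{
    strata := (fun S => π '' S) '' 𝒳.strata
    nonempty_strata := by
      rintro _ ⟨S, hS, rfl⟩
      exact (𝒳.nonempty_strata S hS).image π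
    covers := by
      intro b
      obtain ⟨x, rfl⟩ := hoq.surjective b
      obtain ⟨S, hS, hx⟩ := 𝒳.covers x
      exact ⟨π '' S, ⟨S, hS, rfl⟩, ⟨x, hx, rfl⟩⟩
    disj := by
      rintro _ ⟨S, hS, rfl⟩ _ ⟨T, hT, rfl⟩ ⟨b, ⟨x, hx, hxb⟩, ⟨y, hy, hyb⟩⟩
      obtain ⟨g, hg⟩ : x ∈ MulAction.orbit G y := Quotient.exact (hxb.trans hyb.symm)
      have hST : S = (fun x => g • x) '' T :=
        𝒳.disj S hS _ (hmor g T hT) ⟨x, hx, y, hy, hg⟩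
      rw [hST]; exact himg g T
    connected := by
      rintro _ ⟨S, hS, rfl⟩
      exact (𝒳.connected S hS).image π hcont.continuousOn
    locallyFinite := by
      intro b
      obtain ⟨x, rfl⟩ := hoq.surjective b
      obtain ⟨U, hU, hfin⟩ := 𝒳.locallyFinite x
      refine ⟨π '' interior U,
        (hoq.isOpenMap _ isOpen_interior).mem_nhds
          ⟨x, mem_interior_iff_mem_nhds.2 hU, rfl⟩, ?_⟩
      refine ((hfin.image (fun S => π '' S)).subset ?_)
      rintro _ ⟨⟨T, hT, rfl⟩, b', ⟨y, hy, hyb⟩, ⟨u, hu, hub⟩⟩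
      obtain ⟨g, hg⟩ : y ∈ MulAction.orbit G u := Quotient.exact (hyb.trans hub.symm)
      refine ⟨(fun x => g⁻¹ • x) '' T, ⟨hmor g⁻¹ T hT,
        ⟨u, ⟨y, hy, by dsimp only at hg ⊢; rw [← hg, inv_smul_smul]⟩, interior_subset hu⟩⟩, himg _ _⟩
    frontier_cond := by
      rintro _ ⟨S, hS, rfl⟩ _ ⟨T, hT, rfl⟩ ⟨b, ⟨x, hx, rfl⟩, hbcl⟩
      -- x lies in the closure of the saturation of T
      have hx' : x ∈ closure (⋃ g : G, (fun x => g • x) '' T) := by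
        rw [← hsat]
        rw [← hoq.isOpenMap.preimage_closure_eq_closure_preimage hcont]
        exact hbcl
      obtain ⟨U, hU, hfin⟩ := 𝒳.locallyFinite x
      set 𝒯 : Set (Set X) :=
        {S' | S' ∈ 𝒳.strata ∧ (S' ∩ U).Nonempty ∧ ∃ g : G, S' = (fun x => g • x) '' T}
        with h𝒯
      have h𝒯fin : 𝒯.Finite := hfin.subset fun S' hS' => ⟨hS'.1, hS'.2.1⟩
      -- x is in the closure of the union of finitely many translates of T
      have hx'' : x ∈ closure (⋃₀ 𝒯) := by
        have hxU : x ∈ interior U := mem_interior_iff_mem_nhds.2 hU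
        rw [mem_closure_iff]
        intro O hO hxO
        rw [mem_closure_iff] at hx'
        obtain ⟨z, hzO : z ∈ O ∩ interior U, hz⟩ :=
          hx' (O ∩ interior U) (hO.inter isOpen_interior) ⟨hxO, hxU⟩
        obtain ⟨g, w, hw, rfl⟩ := Set.mem_iUnion.1 hz
        refine ⟨g • w, hzO.1, Set.mem_sUnion.2 ⟨(fun x => g • x) '' T,
          ⟨hmor g T hT, ⟨g • w, ⟨w, hw, rfl⟩, interior_subset hzO.2⟩, g, rfl⟩,
          ⟨w, hw, rfl⟩⟩⟩
      rw [h𝒯fin.closure_sUnion] at hx''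
      obtain ⟨S', hS'𝒯, hxcl⟩ := Set.mem_iUnion₂.1 hx''
      obtain ⟨hS'str, -, g, rfl⟩ := hS'𝒯
      have hsub : S ⊆ closure ((fun x => g • x) '' T) :=
        𝒳.frontier_cond S hS _ hS'str ⟨x, hx, hxcl⟩
      rintro _ ⟨z, hz, rfl⟩
      have : π z ∈ π '' closure ((fun x => g • x) '' T) := ⟨z, hsub hz, rfl⟩
      have := (image_closure_subset_closure_image hcont) this
      rwa [himg] at this }, rfl, hcont, ?_⟩
  intro S hS
  exact ⟨S, hS, rfl⟩
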